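/- Let X be a real Banach space, let T be a compact bounded linear operator on X, and suppose there exist bounded linear operators B and S on X such that B ∘ (I − T) = I − S and ‖S‖ < 1 in operator norm. Then I − T is bijective, its inverse is a bounded linear operator, and (I − T)⁻¹ = (I − S)⁻¹ ∘ B. -/

import Mathlib

open Metric

/-- Fredholm alternative half: if `1 - T` is left-invertible and `T` is compact, then
`1 - T` is surjective. -/
lemma fredholm_surj
    {X : Type*} [NormedAddCommGroup X] [NormedSpace ℝ X] [CompleteSpace X]
    (T : X →L[ℝ] X) (hT : IsCompactOperator (⇑T))
    (L : X →L[ℝ] X) (hL : L * (1 - T) = 1) :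
    Function.Surjective (⇑(1 - T)) := by
  set A : X →L[ℝ] X := 1 - T with hA
  -- left inverses of powers
  have hLn : ∀ n, L ^ n * A ^ n = 1 := by
    intro n
    induction n with
    | zero => simp
    | succ n ih =>
      rw [pow_succ L, pow_succ' A, mul_assoc, ← mul_assoc L A, hL, one_mul, ih]
  have hinj : ∀ n, Function.Injective (⇑(A ^ n)) := by
    intro n x y hxy
    have := congrArg (fun f : X →L[ℝ] X => f) (hLn n)
    have h1 : (L ^ n) ((A ^ n) x) = (L ^ n) ((A ^ n) y) := by rw [hxy]
    simpa [ContinuousLinearMap.mul_apply, hLn n] using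
      congrArg (fun z => z) (show ((L ^ n * A ^ n) x) = ((L ^ n * A ^ n) y) by
        rw [ContinuousLinearMap.mul_apply, ContinuousLinearMap.mul_apply, h1])
  -- closed ranges
  have hclosed : ∀ n, IsClosed ((LinearMap.range ((A ^ n : X →L[ℝ] X) : X →ₗ[ℝ] X) : Submodule ℝ X) : Set X) := by
    intro n
    have hanti : AntilipschitzWith ‖L ^ n‖₊ (⇑(A ^ n)) := by
      apply (A ^ n).antilipschitz_of_bound
      intro x
      calc ‖x‖ = ‖(L ^ n * A ^ n) x‖ := by rw [hLn n]; simp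
        _ = ‖(L ^ n) ((A ^ n) x)‖ := by simp [ContinuousLinearMap.mul_apply]
        _ ≤ ‖L ^ n‖ * ‖(A ^ n) x‖ := (L ^ n).le_opNorm _
    have := hanti.isClosed_range (A ^ n).uniformContinuous
    rw [LinearMap.coe_range]; exact this
  by_contra hsurj
  obtain ⟨y₀, hy₀⟩ := by
    rw [Function.Surjective] at hsurj; push_neg at hsurj; exact hsurj
  have hy₀' : y₀ ∉ LinearMap.range ((A : X →L[ℝ] X) : X →ₗ[ℝ] X) := by
    intro ⟨z, hz⟩; exact hy₀ z hz
  set F : ℕ → Submodule ℝ X := fun n => LinearMap.range ((A ^ n : X →L[ℝ] X) : X →ₗ[ℝ] X) with hF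
  have hmono : ∀ n, F (n + 1) ≤ F n := by
    intro n x ⟨z, hz⟩
    exact ⟨A z, by rw [← hz]; simp [pow_succ, ContinuousLinearMap.mul_apply]⟩
  have hAmem : ∀ n x, x ∈ F n → A x ∈ F (n + 1) := by
    intro n x ⟨z, hz⟩
    exact ⟨z, by rw [← hz]; simp [pow_succ', ContinuousLinearMap.mul_apply]⟩
  have hstrict : ∀ n, (A ^ n) y₀ ∈ F n ∧ (A ^ n) y₀ ∉ F (n + 1) := by
    intro n
    refine ⟨⟨y₀, rfl⟩, ?_⟩
    rintro ⟨z, hz⟩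
    apply hy₀'
    refine ⟨z, ?_⟩
    apply hinj n
    rw [← hz]
    calc (A ^ n) (A z) = ((A ^ n) * A) z := rfl
      _ = (A ^ (n+1)) z := by rw [← pow_succ]
  -- Riesz-type sequence
  have hriesz : ∀ n, ∃ x : X, x ∈ F n ∧ ‖x‖ = 1 ∧ ∀ z ∈ F (n + 1), (1:ℝ)/2 ≤ ‖x - z‖ := by
    intro n
    obtain ⟨hv1, hv2⟩ := hstrict n
    set v := (A ^ n) y₀
    have hne : ((F (n+1) : Set X)).Nonempty := ⟨0, (F (n+1)).zero_mem⟩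
    have hd : 0 < infDist v (F (n+1) : Set X) :=
      ((hclosed (n+1)).notMem_iff_infDist_pos hne).1 hv2
    set d := infDist v (F (n+1) : Set X) with hdd
    obtain ⟨y, hy, hyd⟩ := (infDist_lt_iff hne).1 (show d < 2 * d by linarith)
    rw [dist_eq_norm] at hyd
    set c := ‖v - y‖ with hc
    have hcpos : 0 < c := by
      rcases eq_or_lt_of_le (norm_nonneg (v - y)) with h | h
      · exfalso
        have : v = y := by
          have := (norm_eq_zero.1 h.symm); exact sub_eq_zero.1 this
        exact hv2 (this ▸ hy)
      · exact h
    refine ⟨c⁻¹ • (v - y), ?_, ?_, ?_⟩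
    · exact Submodule.smul_mem _ _ (Submodule.sub_mem _ hv1 (hmono n hy))
    · rw [norm_smul]; simp [abs_of_pos (inv_pos.2 hcpos), hc]
      exact inv_mul_cancel₀ (ne_of_gt hcpos)
    · intro z hz
      have hmem : y + c • z ∈ F (n + 1) :=
        Submodule.add_mem _ hy (Submodule.smul_mem _ _ hz)
      have h1 : d ≤ ‖v - (y + c • z)‖ := by
        have h0 := infDist_le_dist_of_mem (x := v) hmem
        rwa [dist_eq_norm] at h0
      have h2 : c⁻¹ • (v - y) - z = c⁻¹ • (v - (y + c • z)) := by
        rw [smul_sub, smul_sub]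
        rw [smul_add, smul_smul, inv_mul_cancel₀ (ne_of_gt hcpos), one_smul]
        abel
      rw [h2, norm_smul]
      rw [Real.norm_eq_abs, abs_of_pos (inv_pos.2 hcpos)]
      have : c⁻¹ * d ≤ c⁻¹ * ‖v - (y + c • z)‖ :=
        mul_le_mul_of_nonneg_left h1 (le_of_lt (inv_pos.2 hcpos))
      have hhalf : (1:ℝ)/2 ≤ c⁻¹ * d := by
        have hcc : c⁻¹ * c = 1 := inv_mul_cancel₀ hcpos.ne'
        have h3 : c⁻¹ * c ≤ c⁻¹ * (2 * d) :=
          mul_le_mul_of_nonneg_left (le_of_lt hyd) (inv_pos.2 hcpos).le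
        rw [hcc] at h3
        linarith
      linarith
  choose x hxF hxnorm hxsep using hriesz
  -- separation of images under T
  have hsep : ∀ m n, n < m → (1:ℝ)/2 ≤ ‖T (x n) - T (x m)‖ := by
    intro m n hnm
    have key : T (x n) - T (x m) = x n - (A (x n) + x m - A (x m)) := by
      have h1 : A (x n) = x n - T (x n) := by simp [hA, ContinuousLinearMap.sub_apply]
      have h2 : A (x m) = x m - T (x m) := by simp [hA, ContinuousLinearMap.sub_apply]
      rw [h1, h2]; abel
    have hmemsub : ∀ k l, k ≤ l → F l ≤ F k := by
      intro k l hkl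
      induction hkl with
      | refl => exact le_refl _
      | step h ih => exact le_trans (hmono _) ih
    have hz : A (x n) + x m - A (x m) ∈ F (n + 1) := by
      have h1 : A (x n) ∈ F (n + 1) := hAmem n _ (hxF n)
      have h2 : x m ∈ F (n + 1) := hmemsub (n+1) m (by omega) (hxF m)
      have h3 : A (x m) ∈ F (n + 1) := hmemsub (n+1) (m+1) (by omega) (hAmem m _ (hxF m))
      exact Submodule.sub_mem _ (Submodule.add_mem _ h1 h2) h3
    rw [key]
    exact hxsep n _ hz
  -- compactness contradiction
  have hcpt : IsCompact (closure (⇑T '' closedBall 0 1)) :=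
    IsCompactOperator.isCompact_closure_image_closedBall (𝕜₁ := ℝ)
      (f := (T : X →ₗ[ℝ] X)) (by exact_mod_cast hT) 1
  have hmemK : ∀ n, T (x n) ∈ closure (⇑T '' closedBall 0 1) := by
    intro n
    apply subset_closure
    exact ⟨x n, by simp [hxnorm n, mem_closedBall, dist_eq_norm], rfl⟩
  obtain ⟨l, _, φ, hφ, hconv⟩ := hcpt.tendsto_subseq hmemK
  have hcauchy : CauchySeq (fun n => T (x (φ n))) := hconv.cauchySeq
  rw [Metric.cauchySeq_iff] at hcauchy
  obtain ⟨N, hN⟩ := hcauchy (1/2) (by norm_num)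
  have h1 := hN (N + 1) (by omega) N (le_refl N)
  rw [dist_eq_norm] at h1
  have h2 := hsep (φ (N + 1)) (φ N) (hφ (by omega))
  rw [norm_sub_rev] at h2
  linarith



/-- Let `X` be a real Banach space, let `T` be a compact bounded linear
operator on `X`, and suppose there exist bounded linear operators `B` and `S` on `X` such that
`B ∘ (I − T) = I − S` and `‖S‖ < 1`.  Then `I − T` is bijective, its inverse is a bounded
linear operator `T'`, and `T' = (I − S)⁻¹ ∘ B`, where `(I − S)⁻¹` is the inverse of the unit
`1 - S` (given by the Neumann series, since `‖S‖ < 1`). -/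
theorem stmt_3
    {X : Type*} [NormedAddCommGroup X] [NormedSpace ℝ X] [CompleteSpace X]
    (T : X →L[ℝ] X) (hT : IsCompactOperator (⇑T))
    (B S : X →L[ℝ] X) (hBS : B * (1 - T) = 1 - S) (hS : ‖S‖ < 1) :
    Function.Bijective (⇑(1 - T)) ∧
      ∃ T' : X →L[ℝ] X,
        T' * (1 - T) = 1 ∧ (1 - T) * T' = 1 ∧
          T' = (↑(Units.oneSub S hS)⁻¹ : X →L[ℝ] X) * B := by
  set L : X →L[ℝ] X := (↑(Units.oneSub S hS)⁻¹ : X →L[ℝ] X) * B with hLdef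
  have hU : ((Units.oneSub S hS : (X →L[ℝ] X)ˣ) : X →L[ℝ] X) = 1 - S := rfl
  have hLA : L * (1 - T) = 1 := by
    rw [hLdef, mul_assoc, hBS, ← hU]
    exact Units.inv_mul _
  have hinj : Function.Injective (⇑(1 - T)) := by
    intro a b hab
    have : (L * (1 - T)) a = (L * (1 - T)) b := by
      simp only [ContinuousLinearMap.mul_apply, hab]
    simpa [hLA] using this
  have hsurj : Function.Surjective (⇑(1 - T)) := fredholm_surj T hT L hLA
  have hAL : (1 - T) * L = 1 := by
    ext y
    obtain ⟨z, hz⟩ := hsurj y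
    have h1 : L ((1 - T) z) = z := by
      have h2 := congrArg (fun f : X →L[ℝ] X => f z) hLA
      simpa [ContinuousLinearMap.mul_apply] using h2
    show (1 - T) (L y) = y
    rw [← hz, h1]
  exact ⟨⟨hinj, hsurj⟩, L, hLA, hAL, rfl⟩
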